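/- Let σ̌ ⊂ ℝ² be a two-dimensional strongly convex rational cone with dual lattice M = ℤ², let Ǧ be the minimal generating set of the semigroup σ̌ ∩ M, and let ν be a lattice point in the interior of the dual cone σ. Then there exist μ₁, μ₂ ∈ Ǧ forming a ℤ-basis of M such that ⟨μ, ν⟩ ≥ ⟨μᵢ, ν⟩ for every μ ∈ Ǧ \ {μ₁, μ₂} and i = 1, 2. -/

import Mathlib

/-- The standard pairing `M × N → ℤ` on `ℤ² × ℤ²`. -/
def pair2 (m n : ℤ × ℤ) : ℤ := m.1 * n.1 + m.2 * n.2

/-- `m` is a nonnegative integer combination of elements of `G`. -/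
def genBy (G : Finset (ℤ × ℤ)) (m : ℤ × ℤ) : Prop :=
  ∃ f : (ℤ × ℤ) → ℕ, m = ∑ g ∈ G, (f g : ℤ) • g

def ParMul (μ₁ μ : ℤ × ℤ) : Prop := ∃ k : ℤ, μ.1 = k * μ₁.1 ∧ μ.2 = k * μ₁.2

lemma parMul_zero (μ₁ : ℤ × ℤ) : ParMul μ₁ 0 := ⟨0, by simp⟩

lemma pair2_sum (G : Finset (ℤ × ℤ)) (f : (ℤ × ℤ) → ℤ) (ν : ℤ × ℤ) :
    pair2 (∑ g ∈ G, f g • g) ν = ∑ g ∈ G, f g * pair2 g ν := by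
  unfold pair2
  rw [Prod.fst_sum, Prod.snd_sum, Finset.sum_mul, Finset.sum_mul, ← Finset.sum_add_distrib]
  refine Finset.sum_congr rfl fun g hg => ?_
  simp only [Prod.smul_fst, Prod.smul_snd, smul_eq_mul]
  ring

lemma parMul_sum (μ₁ : ℤ × ℤ) (f : (ℤ × ℤ) → ℕ) (t : Finset (ℤ × ℤ))
    (h : ∀ g ∈ t, f g ≠ 0 → ParMul μ₁ g) : ParMul μ₁ (∑ g ∈ t, (f g : ℤ) • g) := by
  refine Finset.sum_induction _ (ParMul μ₁) ?_ (parMul_zero μ₁) ?_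
  · rintro a b ⟨k₁, h1, h2⟩ ⟨k₂, h3, h4⟩
    exact ⟨k₁ + k₂, by simp only [Prod.fst_add, h1, h3]; ring,
      by simp only [Prod.snd_add, h2, h4]; ring⟩
  · intro g hg
    by_cases hfg : f g = 0
    · simp [hfg, parMul_zero]
    · obtain ⟨k, h1, h2⟩ := h g hg hfg
      exact ⟨(f g : ℤ) * k, by simp only [Prod.smul_fst, smul_eq_mul, h1]; ring,
        by simp only [Prod.smul_snd, smul_eq_mul, h2]; ring⟩

lemma gen_erase (G : Finset (ℤ × ℤ)) (f : (ℤ × ℤ) → ℕ) (μ μ₁ : ℤ × ℤ) (c : ℕ)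
    (hμG : μ ∈ G) (hμ₁ : μ₁ ∈ G.erase μ) (hcμ : (c : ℤ) • μ₁ = (f μ : ℤ) • μ) :
    ∑ g ∈ G, (f g : ℤ) • g
      = ∑ g ∈ G.erase μ, ((if g = μ₁ then f μ₁ + c else f g : ℕ) : ℤ) • g := by
  classical
  have h1 : ∑ g ∈ G.erase μ, ((if g = μ₁ then f μ₁ + c else f g : ℕ) : ℤ) • g
      = ∑ g ∈ G.erase μ, ((f g : ℤ) • g + (if g = μ₁ then (c : ℤ) • μ₁ else 0)) := by
    refine Finset.sum_congr rfl fun g hg => ?_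
    by_cases hgμ : g = μ₁
    · subst hgμ
      rw [if_pos rfl, if_pos rfl]
      push_cast
      rw [add_smul]
    · rw [if_neg hgμ, if_neg hgμ, add_zero]
  rw [h1, Finset.sum_add_distrib, Finset.sum_ite_eq' (G.erase μ) μ₁, if_pos hμ₁, hcμ, add_comm]
  exact (Finset.add_sum_erase _ _ hμG).symm

set_option maxHeartbeats 2000000 in
/-- Condition (*) for toric surfaces: let `σ̌` be a two-dimensional strongly convex
rational cone in `ℝ²` (spanned by two `ℝ`-linearly independent lattice vectors
`w₁, w₂`), let `S = σ̌ ∩ ℤ²`, let `G` be the minimal generating set of the semigroup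
`S`, and let `ν ∈ ℤ²` pair strictly positively with every nonzero element of `S`
(i.e. `ν` lies in the interior of the dual cone `σ`). Then there are `μ₁, μ₂ ∈ G`
forming a `ℤ`-basis of `ℤ²` such that `⟨μ, ν⟩ ≥ ⟨μᵢ, ν⟩` for every
`μ ∈ G \ {μ₁, μ₂}` and `i = 1, 2`. -/
theorem toric_surface_condition_star
    (w₁ w₂ : ℤ × ℤ) (hw : w₁.1 * w₂.2 - w₁.2 * w₂.1 ≠ 0)
    (S : Set (ℤ × ℤ))
    (hS : S = {m : ℤ × ℤ | ∃ a b : ℝ, 0 ≤ a ∧ 0 ≤ b ∧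
      (m.1 : ℝ) = a * w₁.1 + b * w₂.1 ∧ (m.2 : ℝ) = a * w₁.2 + b * w₂.2})
    (G : Finset (ℤ × ℤ))
    (hGS : (G : Set (ℤ × ℤ)) ⊆ S)
    (hgen : ∀ m ∈ S, genBy G m)
    (hmin : ∀ G' : Finset (ℤ × ℤ), G' ⊂ G → ∃ m ∈ S, ¬ genBy G' m)
    (ν : ℤ × ℤ) (hν : ∀ μ ∈ S, μ ≠ 0 → 0 < pair2 μ ν) :
    ∃ μ₁ ∈ G, ∃ μ₂ ∈ G,
      (μ₁.1 * μ₂.2 - μ₁.2 * μ₂.1 = 1 ∨ μ₁.1 * μ₂.2 - μ₁.2 * μ₂.1 = -1) ∧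
      ∀ μ ∈ G, μ ≠ μ₁ → μ ≠ μ₂ →
        pair2 μ₁ ν ≤ pair2 μ ν ∧ pair2 μ₂ ν ≤ pair2 μ ν := by
  classical
  -- basic membership facts
  have hw1S : w₁ ∈ S := by
    rw [hS]; exact ⟨1, 0, by norm_num, by norm_num, by push_cast; ring, by push_cast; ring⟩
  have hw2S : w₂ ∈ S := by
    rw [hS]; exact ⟨0, 1, by norm_num, by norm_num, by push_cast; ring, by push_cast; ring⟩
  have hw1ne : w₁ ≠ 0 := by
    rintro rfl; exact hw (by simp)
  -- key membership lemma
  have hmemS : ∀ u ∈ S, ∀ v ∈ S, ∀ r s t : ℤ, 0 ≤ r → 0 ≤ s → 0 < t →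
      ∀ x : ℤ × ℤ, t * x.1 = r * u.1 + s * v.1 → t * x.2 = r * u.2 + s * v.2 → x ∈ S := by
    intro u hu v hv r s t hr hs ht x hx1 hx2
    rw [hS] at hu hv ⊢
    obtain ⟨a₁, b₁, ha₁, hb₁, e₁, e₂⟩ := hu
    obtain ⟨a₂, b₂, ha₂, hb₂, e₃, e₄⟩ := hv
    have hr' : (0:ℝ) ≤ (r:ℝ) := by exact_mod_cast hr
    have hs' : (0:ℝ) ≤ (s:ℝ) := by exact_mod_cast hs
    have ht' : (0:ℝ) < (t:ℝ) := by exact_mod_cast ht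
    have ht0 : (t:ℝ) ≠ 0 := ne_of_gt ht'
    have c1 : (t:ℝ) * (x.1:ℝ) = (r:ℝ) * (u.1:ℝ) + (s:ℝ) * (v.1:ℝ) := by exact_mod_cast hx1
    have c2 : (t:ℝ) * (x.2:ℝ) = (r:ℝ) * (u.2:ℝ) + (s:ℝ) * (v.2:ℝ) := by exact_mod_cast hx2
    refine ⟨((r:ℝ) * a₁ + (s:ℝ) * a₂) / t, ((r:ℝ) * b₁ + (s:ℝ) * b₂) / t, ?_, ?_, ?_, ?_⟩
    · apply div_nonneg _ (le_of_lt ht')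
      exact add_nonneg (mul_nonneg hr' ha₁) (mul_nonneg hs' ha₂)
    · apply div_nonneg _ (le_of_lt ht')
      exact add_nonneg (mul_nonneg hr' hb₁) (mul_nonneg hs' hb₂)
    · field_simp
      linear_combination c1 + (r:ℝ) * e₁ + (s:ℝ) * e₃
    · field_simp
      linear_combination c2 + (r:ℝ) * e₂ + (s:ℝ) * e₄
  -- 0 is not in G
  have hGne0 : ∀ g ∈ G, g ≠ 0 := by
    intro g hg h0
    subst h0
    obtain ⟨m, hmS, hng⟩ := hmin (G.erase 0) (Finset.erase_ssubset hg)
    apply hng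
    obtain ⟨f, hf⟩ := hgen m hmS
    refine ⟨f, ?_⟩
    rw [hf, ← Finset.add_sum_erase _ _ hg, smul_zero, zero_add]
  have hPG : ∀ g ∈ G, 0 < pair2 g ν := fun g hg => hν g (hGS hg) (hGne0 g hg)
  -- μ₁ : minimizer over S \ {0}
  obtain ⟨n₁, ⟨μ₁, hμ₁S, hμ₁ne, hμ₁P⟩, hleast₁⟩ :=
    Int.exists_least_of_bdd (P := fun n => ∃ μ, μ ∈ S ∧ μ ≠ 0 ∧ pair2 μ ν = n)
      ⟨0, by rintro z ⟨μ, hμ, hne, rfl⟩; exact le_of_lt (hν μ hμ hne)⟩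
      ⟨pair2 w₁ ν, w₁, hw1S, hw1ne, rfl⟩
  have min₁ : ∀ μ ∈ S, μ ≠ 0 → pair2 μ₁ ν ≤ pair2 μ ν := by
    intro μ hμ hne
    rw [hμ₁P]; exact hleast₁ _ ⟨μ, hμ, hne, rfl⟩
  have hP₁pos : 0 < pair2 μ₁ ν := hν _ hμ₁S hμ₁ne
  -- nonemptiness of S \ ℤμ₁
  have hParne : ∀ μ : ℤ × ℤ, ¬ ParMul μ₁ μ → μ ≠ 0 := by
    rintro μ h rfl; exact h (parMul_zero μ₁)
  have hex : ∃ μ, μ ∈ S ∧ ¬ ParMul μ₁ μ := by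
    by_contra h
    push_neg at h
    obtain ⟨k₁, e1, e2⟩ := h w₁ hw1S
    obtain ⟨k₂, e3, e4⟩ := h w₂ hw2S
    exact hw (by rw [e1, e2, e3, e4]; ring)
  obtain ⟨y₀, hy₀S, hy₀P⟩ := hex
  -- μ₂ : minimizer of pairing over S \ ℤμ₁, ties broken by |det(μ₁, ·)|
  obtain ⟨n₂, ⟨y₁, hy₁S, hy₁P, hy₁n⟩, hleast₂⟩ :=
    Int.exists_least_of_bdd (P := fun n => ∃ μ, μ ∈ S ∧ ¬ ParMul μ₁ μ ∧ pair2 μ ν = n)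
      ⟨0, by rintro z ⟨μ, hμ, hne, rfl⟩; exact le_of_lt (hν μ hμ (hParne μ hne))⟩
      ⟨pair2 y₀ ν, y₀, hy₀S, hy₀P, rfl⟩
  obtain ⟨dm, ⟨μ₂, hμ₂S, hμ₂Par, hμ₂P, hμ₂d⟩, hleast₃⟩ :=
    Int.exists_least_of_bdd
      (P := fun n => ∃ μ, μ ∈ S ∧ ¬ ParMul μ₁ μ ∧ pair2 μ ν = n₂ ∧ |μ₁.1 * μ.2 - μ₁.2 * μ.1| = n)
      ⟨0, by rintro z ⟨μ, _, _, _, h⟩; rw [← h]; positivity⟩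
      ⟨_, y₁, hy₁S, hy₁P, hy₁n, rfl⟩
  have min₂ : ∀ μ ∈ S, ¬ ParMul μ₁ μ → pair2 μ₂ ν ≤ pair2 μ ν := by
    intro μ hμ hp
    rw [hμ₂P]; exact hleast₂ _ ⟨μ, hμ, hp, rfl⟩
  have tie₂ : ∀ μ ∈ S, ¬ ParMul μ₁ μ → pair2 μ ν = pair2 μ₂ ν →
      |μ₁.1 * μ₂.2 - μ₁.2 * μ₂.1| ≤ |μ₁.1 * μ.2 - μ₁.2 * μ.1| := by
    intro μ hμ hp he
    rw [hμ₂d]; exact hleast₃ _ ⟨μ, hμ, hp, he.trans hμ₂P, rfl⟩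
  have hμ₂ne : μ₂ ≠ 0 := hParne μ₂ hμ₂Par
  have hP₂pos : 0 < pair2 μ₂ ν := hν _ hμ₂S hμ₂ne
  have hP₁le₂ : pair2 μ₁ ν ≤ pair2 μ₂ ν := min₁ μ₂ hμ₂S hμ₂ne
  -- primitivity of μ₁

  have hgcd : Int.gcd μ₁.1 μ₁.2 = 1 := by
    by_contra hg1
    have hgne : Int.gcd μ₁.1 μ₁.2 ≠ 0 := by
      intro h
      obtain ⟨h1, h2⟩ := Int.gcd_eq_zero_iff.1 h
      exact hμ₁ne (Prod.ext h1 h2)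
    have hg2 : 2 ≤ (Int.gcd μ₁.1 μ₁.2 : ℤ) := by omega
    set g : ℤ := (Int.gcd μ₁.1 μ₁.2 : ℤ) with hgdef
    have hgpos : 0 < g := by omega
    have hz1 : g * (μ₁.1 / g) = μ₁.1 := Int.mul_ediv_cancel' (Int.gcd_dvd_left _ _)
    have hz2 : g * (μ₁.2 / g) = μ₁.2 := Int.mul_ediv_cancel' (Int.gcd_dvd_right _ _)
    set z : ℤ × ℤ := (μ₁.1 / g, μ₁.2 / g) with hzdef
    have hzS : z ∈ S := by
      refine hmemS μ₁ hμ₁S μ₁ hμ₁S 1 0 g (by norm_num) (by norm_num) hgpos z ?_ ?_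
      · show g * (μ₁.1 / g) = 1 * μ₁.1 + 0 * μ₁.1; linear_combination hz1
      · show g * (μ₁.2 / g) = 1 * μ₁.2 + 0 * μ₁.2; linear_combination hz2
    have hzne : z ≠ 0 := by
      intro h0
      apply hμ₁ne
      have e1 : z.1 = 0 := by rw [h0]; rfl
      have e2 : z.2 = 0 := by rw [h0]; rfl
      refine Prod.ext ?_ ?_
      · show μ₁.1 = 0; rw [← hz1]; show g * z.1 = 0; rw [e1, mul_zero]
      · show μ₁.2 = 0; rw [← hz2]; show g * z.2 = 0; rw [e2, mul_zero]
    have hPz : g * pair2 z ν = pair2 μ₁ ν := by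
      simp only [pair2]
      have c1 : g * z.1 = μ₁.1 := hz1
      have c2 : g * z.2 = μ₁.2 := hz2
      linear_combination ν.1 * c1 + ν.2 * c2
    have hle := min₁ z hzS hzne
    nlinarith [hP₁pos, hg2, hle, hPz]
  have hDne : μ₁.1 * μ₂.2 - μ₁.2 * μ₂.1 ≠ 0 := by
    intro h0
    have hb := Int.gcd_eq_gcd_ab μ₁.1 μ₁.2
    rw [hgcd] at hb
    push_cast at hb
    exact hμ₂Par ⟨Int.gcdA μ₁.1 μ₁.2 * μ₂.1 + Int.gcdB μ₁.1 μ₁.2 * μ₂.2,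
      by linear_combination μ₂.1 * hb - Int.gcdB μ₁.1 μ₁.2 * h0,
      by linear_combination μ₂.2 * hb + Int.gcdA μ₁.1 μ₁.2 * h0⟩

  have hμ₁G : μ₁ ∈ G := by
    obtain ⟨f, hf⟩ := hgen μ₁ hμ₁S
    have hex0 : ∃ g₀ ∈ G, f g₀ ≠ 0 := by
      by_contra h
      push_neg at h
      refine hμ₁ne ?_
      rw [hf]
      exact Finset.sum_eq_zero fun g hg => by rw [h g hg]; simp
    obtain ⟨g₀, hg₀G, hfg₀⟩ := hex0
    have hPsum : pair2 μ₁ ν = ∑ g ∈ G, (f g : ℤ) * pair2 g ν := by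
      conv_lhs => rw [hf]
      exact pair2_sum G _ ν
    have hsplit : pair2 μ₁ ν
        = (f g₀ : ℤ) * pair2 g₀ ν + ∑ g ∈ G.erase g₀, (f g : ℤ) * pair2 g ν := by
      rw [hPsum, ← Finset.add_sum_erase _ _ hg₀G]
    have hT0 : 0 ≤ ∑ g ∈ G.erase g₀, (f g : ℤ) := Finset.sum_nonneg fun g _ => by positivity
    have hsum_ge : (∑ g ∈ G.erase g₀, (f g : ℤ)) * pair2 μ₁ ν
        ≤ ∑ g ∈ G.erase g₀, (f g : ℤ) * pair2 g ν := by
      rw [Finset.sum_mul]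
      refine Finset.sum_le_sum fun g hg => ?_
      exact mul_le_mul_of_nonneg_left
        (min₁ g (hGS (Finset.mem_of_mem_erase hg)) (hGne0 g (Finset.mem_of_mem_erase hg)))
        (by positivity)
    have hq := mul_le_mul_of_nonneg_left (min₁ g₀ (hGS hg₀G) (hGne0 g₀ hg₀G))
      (show (0:ℤ) ≤ (f g₀ : ℤ) by positivity)
    have hfg₁ : 1 ≤ (f g₀ : ℤ) := by exact_mod_cast Nat.one_le_iff_ne_zero.2 hfg₀
    have hle1 : (f g₀ : ℤ) ≤ 1 := by
      nlinarith [hsplit, hsum_ge, hq, hP₁pos, hT0, mul_nonneg hT0 (le_of_lt hP₁pos)]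
    have hTle : ∑ g ∈ G.erase g₀, (f g : ℤ) ≤ 0 := by
      nlinarith [hsplit, hsum_ge, hq, hP₁pos, hfg₁]
    have hfg1 : (f g₀ : ℤ) = 1 := le_antisymm hle1 hfg₁
    have hTeq : ∑ g ∈ G.erase g₀, (f g : ℤ) = 0 := le_antisymm hTle hT0
    have hzero : ∀ g ∈ G.erase g₀, (f g : ℤ) = 0 :=
      fun g hg => (Finset.sum_eq_zero_iff_of_nonneg (fun g _ => by positivity)).1 hTeq g hg
    have hme : μ₁ = g₀ := by
      rw [hf, ← Finset.add_sum_erase _ _ hg₀G, hfg1, one_smul,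
        Finset.sum_eq_zero (fun g hg => by rw [hzero g hg, zero_smul]), add_zero]
    rw [hme]; exact hg₀G

  have hμ₂G : μ₂ ∈ G := by
    obtain ⟨f, hf⟩ := hgen μ₂ hμ₂S
    have hex0 : ∃ g₀ ∈ G, f g₀ ≠ 0 ∧ ¬ ParMul μ₁ g₀ := by
      by_contra h
      push_neg at h
      exact hμ₂Par (by rw [hf]; exact parMul_sum μ₁ f G h)
    obtain ⟨g₀, hg₀G, hfg₀, hg₀Par⟩ := hex0
    have hPsum : pair2 μ₂ ν = ∑ g ∈ G, (f g : ℤ) * pair2 g ν := by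
      conv_lhs => rw [hf]
      exact pair2_sum G _ ν
    have hsplit : pair2 μ₂ ν
        = (f g₀ : ℤ) * pair2 g₀ ν + ∑ g ∈ G.erase g₀, (f g : ℤ) * pair2 g ν := by
      rw [hPsum, ← Finset.add_sum_erase _ _ hg₀G]
    have hT0 : 0 ≤ ∑ g ∈ G.erase g₀, (f g : ℤ) := Finset.sum_nonneg fun g _ => by positivity
    have hsum_ge : (∑ g ∈ G.erase g₀, (f g : ℤ)) * pair2 μ₁ ν
        ≤ ∑ g ∈ G.erase g₀, (f g : ℤ) * pair2 g ν := by
      rw [Finset.sum_mul]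
      refine Finset.sum_le_sum fun g hg => ?_
      exact mul_le_mul_of_nonneg_left
        (min₁ g (hGS (Finset.mem_of_mem_erase hg)) (hGne0 g (Finset.mem_of_mem_erase hg)))
        (by positivity)
    have hq := mul_le_mul_of_nonneg_left (min₂ g₀ (hGS hg₀G) hg₀Par)
      (show (0:ℤ) ≤ (f g₀ : ℤ) by positivity)
    have hfg₁ : 1 ≤ (f g₀ : ℤ) := by exact_mod_cast Nat.one_le_iff_ne_zero.2 hfg₀
    have hle1 : (f g₀ : ℤ) ≤ 1 := by
      nlinarith [hsplit, hsum_ge, hq, hP₂pos, hT0, mul_nonneg hT0 (le_of_lt hP₁pos)]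
    have hTle : ∑ g ∈ G.erase g₀, (f g : ℤ) ≤ 0 := by
      nlinarith [hsplit, hsum_ge, hq, hP₂pos, hP₁pos, hfg₁]
    have hfg1 : (f g₀ : ℤ) = 1 := le_antisymm hle1 hfg₁
    have hTeq : ∑ g ∈ G.erase g₀, (f g : ℤ) = 0 := le_antisymm hTle hT0
    have hzero : ∀ g ∈ G.erase g₀, (f g : ℤ) = 0 :=
      fun g hg => (Finset.sum_eq_zero_iff_of_nonneg (fun g _ => by positivity)).1 hTeq g hg
    have hme : μ₂ = g₀ := by
      rw [hf, ← Finset.add_sum_erase _ _ hg₀G, hfg1, one_smul,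
        Finset.sum_eq_zero (fun g hg => by rw [hzero g hg, zero_smul]), add_zero]
    rw [hme]; exact hg₀G
  -- no other element of G is a multiple of μ₁

  have hnotparG : ∀ μ ∈ G, μ ≠ μ₁ → ¬ ParMul μ₁ μ := by
    rintro μ hμG hne ⟨k, hk1, hk2⟩
    have hμne := hGne0 μ hμG
    have hPμ : pair2 μ ν = k * pair2 μ₁ ν := by
      simp only [pair2]; rw [hk1, hk2]; ring
    have hPμpos := hPG μ hμG
    have hk1le : 1 ≤ k := by nlinarith [hP₁pos]
    have hkne1 : k ≠ 1 := by
      rintro rfl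
      exact hne (Prod.ext (by rw [hk1, one_mul]) (by rw [hk2, one_mul]))
    have hk2le : 2 ≤ k := by omega
    obtain ⟨m, hmS, hng⟩ := hmin (G.erase μ) (Finset.erase_ssubset hμG)
    apply hng
    obtain ⟨f, hf⟩ := hgen m hmS
    have hμ₁mem : μ₁ ∈ G.erase μ := Finset.mem_erase.2 ⟨Ne.symm hne, hμ₁G⟩
    refine ⟨fun g => if g = μ₁ then f μ₁ + k.toNat * f μ else f g, ?_⟩
    rw [hf]
    refine gen_erase G f μ μ₁ (k.toNat * f μ) hμG hμ₁mem ?_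
    have hknat : ((k.toNat : ℤ)) = k := Int.toNat_of_nonneg (by omega)
    have hcast : ((k.toNat * f μ : ℕ) : ℤ) = k * (f μ : ℤ) := by
      push_cast [hknat]
      ring
    refine Prod.ext ?_ ?_
    · simp only [Prod.smul_fst, smul_eq_mul, hcast, hk1]; ring
    · simp only [Prod.smul_snd, smul_eq_mul, hcast, hk2]; ring
  -- the determinant is ±1

  have hD1 : μ₁.1 * μ₂.2 - μ₁.2 * μ₂.1 = 1 ∨ μ₁.1 * μ₂.2 - μ₁.2 * μ₂.1 = -1 := by
    by_contra hcon
    push_neg at hcon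
    set D := μ₁.1 * μ₂.2 - μ₁.2 * μ₂.1 with hD
    obtain ⟨hne1, hne2⟩ := hcon
    set d : ℤ := (D.natAbs : ℤ) with hd
    have hdpos : 0 < d := by omega
    have hd2 : 2 ≤ d := by omega
    have habsD : |D| = d := by rw [hd]; exact Int.abs_eq_natAbs D
    have hdD : d = D ∨ d = -D := by omega
    have hparlem : ∀ (y : ℤ × ℤ) (r' s' : ℤ), d * y.1 = r' * μ₁.1 + s' * μ₂.1 →
        d * y.2 = r' * μ₁.2 + s' * μ₂.2 → s' ≠ 0 → ¬ ParMul μ₁ y := by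
      rintro y r' s' h1 h2 hs' ⟨k, hk1, hk2⟩
      refine mul_ne_zero hs' hDne ?_
      rw [hD]
      linear_combination μ₁.2 * h1 - μ₁.1 * h2 + μ₁.1 * d * hk2 - μ₁.2 * d * hk1
    have hzex : ∃ z : ℤ × ℤ, ¬ (D ∣ z.1 * μ₂.2 - z.2 * μ₂.1) ∨ ¬ (D ∣ μ₁.1 * z.2 - μ₁.2 * z.1) := by
      by_contra h
      push_neg at h
      have h1 : D ∣ μ₂.2 := by simpa using (h (1, 0)).1
      have h2 : D ∣ μ₂.1 := by
        have := (h (0, 1)).1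
        simp only [Prod.fst, Prod.snd] at this
        simpa using this
      have h3 : D ∣ μ₁.2 := by
        have := (h (1, 0)).2
        simpa using this
      have h4 : D ∣ μ₁.1 := by
        have := (h (0, 1)).2
        simpa using this
      have hDD : D * D ∣ μ₁.1 * μ₂.2 - μ₁.2 * μ₂.1 :=
        dvd_sub (mul_dvd_mul h4 h1) (mul_dvd_mul h3 h2)
      rw [← hD] at hDD
      obtain ⟨c, hc⟩ := hDD
      have h1c : (1 : ℤ) = D * c := by
        refine mul_left_cancel₀ hDne ?_
        rw [mul_one]
        conv_lhs => rw [hc]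
        ring
      have hu : IsUnit D := IsUnit.of_mul_eq_one c h1c.symm
      rw [Int.isUnit_iff] at hu
      rcases hu with h | h
      · exact hne1 h
      · exact hne2 h
    obtain ⟨z, hz⟩ := hzex
    have base1 : D * z.1 = (z.1 * μ₂.2 - z.2 * μ₂.1) * μ₁.1 + (μ₁.1 * z.2 - μ₁.2 * z.1) * μ₂.1 := by
      rw [hD]; ring
    have base2 : D * z.2 = (z.1 * μ₂.2 - z.2 * μ₂.1) * μ₁.2 + (μ₁.1 * z.2 - μ₁.2 * z.1) * μ₂.2 := by
      rw [hD]; ring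
    obtain ⟨p, q, hp1, hp2, hpq⟩ : ∃ p q : ℤ, d * z.1 = p * μ₁.1 + q * μ₂.1 ∧
        d * z.2 = p * μ₁.2 + q * μ₂.2 ∧ (¬ (d ∣ p) ∨ ¬ (d ∣ q)) := by
      rcases hdD with h | h
      · exact ⟨_, _, by rw [h]; exact base1, by rw [h]; exact base2, by rw [h]; exact hz⟩
      · refine ⟨-(z.1 * μ₂.2 - z.2 * μ₂.1), -(μ₁.1 * z.2 - μ₁.2 * z.1),
          by rw [h]; linear_combination -base1, by rw [h]; linear_combination -base2, ?_⟩
        rw [h]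
        simp only [neg_dvd, dvd_neg]
        exact hz
    obtain ⟨r, s, x, hr0, hrd, hs0, hsd, hrs, hx1, hx2⟩ : ∃ r s : ℤ, ∃ x : ℤ × ℤ,
        0 ≤ r ∧ r < d ∧ 0 ≤ s ∧ s < d ∧ ¬ (r = 0 ∧ s = 0) ∧
        d * x.1 = r * μ₁.1 + s * μ₂.1 ∧ d * x.2 = r * μ₁.2 + s * μ₂.2 := by
      have e1 := Int.mul_ediv_add_emod p d
      have e2 := Int.mul_ediv_add_emod q d
      refine ⟨p % d, q % d,
        (z.1 - p / d * μ₁.1 - q / d * μ₂.1, z.2 - p / d * μ₁.2 - q / d * μ₂.2),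
        Int.emod_nonneg p (ne_of_gt hdpos), Int.emod_lt_of_pos p hdpos,
        Int.emod_nonneg q (ne_of_gt hdpos), Int.emod_lt_of_pos q hdpos, ?_, ?_, ?_⟩
      · rintro ⟨h1, h2⟩
        rcases hpq with h | h
        · exact h (Int.dvd_of_emod_eq_zero h1)
        · exact h (Int.dvd_of_emod_eq_zero h2)
      · show d * (z.1 - p / d * μ₁.1 - q / d * μ₂.1) = p % d * μ₁.1 + q % d * μ₂.1
        linear_combination hp1 - μ₁.1 * e1 - μ₂.1 * e2
      · show d * (z.2 - p / d * μ₁.2 - q / d * μ₂.2) = p % d * μ₁.2 + q % d * μ₂.2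
        linear_combination hp2 - μ₁.2 * e1 - μ₂.2 * e2
    have hxS : x ∈ S := hmemS μ₁ hμ₁S μ₂ hμ₂S r s d hr0 hs0 hdpos x hx1 hx2
    have hPx : d * pair2 x ν = r * pair2 μ₁ ν + s * pair2 μ₂ ν := by
      simp only [pair2]
      linear_combination ν.1 * hx1 + ν.2 * hx2
    rcases eq_or_lt_of_le hs0 with hs | hspos
    · -- s = 0 : contradiction with minimality of μ₁
      have hrpos : 0 < r := by omega
      have hxne : x ≠ 0 := by
        intro h0
        rw [h0] at hx1 hx2
        simp only [Prod.fst_zero, Prod.snd_zero, mul_zero] at hx1 hx2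
        rw [← hs] at hx1 hx2
        simp only [zero_mul, add_zero] at hx1 hx2
        apply hμ₁ne
        refine Prod.ext ?_ ?_
        · rcases mul_eq_zero.1 hx1.symm with h | h
          · omega
          · exact h
        · rcases mul_eq_zero.1 hx2.symm with h | h
          · omega
          · exact h
      have hle := min₁ x hxS hxne
      rw [← hs] at hPx
      have k1 := mul_le_mul_of_nonneg_left hle (le_of_lt hdpos)
      have k2 := mul_pos (sub_pos.2 hrd) hP₁pos
      nlinarith [hPx, k1, k2]
    · -- 0 < s
      have hnpx : ¬ ParMul μ₁ x := hparlem x r s hx1 hx2 (ne_of_gt hspos)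
      have hxne : x ≠ 0 := hParne x hnpx
      have hle2 := min₂ x hxS hnpx
      have hdet : d * (μ₁.1 * x.2 - μ₁.2 * x.1) = s * D := by
        rw [hD]
        linear_combination μ₁.1 * hx2 - μ₁.2 * hx1
      have habs2 : |μ₁.1 * x.2 - μ₁.2 * x.1| = s := by
        have h1 : |d * (μ₁.1 * x.2 - μ₁.2 * x.1)| = |s * D| := by rw [hdet]
        rw [abs_mul, abs_mul, habsD, abs_of_pos hdpos, abs_of_nonneg hs0] at h1
        exact mul_left_cancel₀ (ne_of_gt hdpos) (by linarith [h1])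
      have hnee : pair2 x ν ≠ pair2 μ₂ ν := by
        intro he
        have ht := tie₂ x hxS hnpx he
        rw [habs2, habsD] at ht
        linarith
      have hlt : pair2 μ₂ ν < pair2 x ν := lt_of_le_of_ne hle2 (Ne.symm hnee)
      have hrs_gt : d < r + s := by
        have k1 := mul_lt_mul_of_pos_left hlt hdpos
        have k2 := mul_le_mul_of_nonneg_left hP₁le₂ hr0
        nlinarith [hPx, hP₂pos]
      obtain ⟨x', hx'1, hx'2⟩ : ∃ x' : ℤ × ℤ, d * x'.1 = (d - r) * μ₁.1 + (d - s) * μ₂.1 ∧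
          d * x'.2 = (d - r) * μ₁.2 + (d - s) * μ₂.2 := by
        refine ⟨(μ₁.1 + μ₂.1 - x.1, μ₁.2 + μ₂.2 - x.2), ?_, ?_⟩
        · show d * (μ₁.1 + μ₂.1 - x.1) = (d - r) * μ₁.1 + (d - s) * μ₂.1
          linear_combination -hx1
        · show d * (μ₁.2 + μ₂.2 - x.2) = (d - r) * μ₁.2 + (d - s) * μ₂.2
          linear_combination -hx2
      have hx'S : x' ∈ S :=
        hmemS μ₁ hμ₁S μ₂ hμ₂S (d - r) (d - s) d (by omega) (by omega) hdpos x' hx'1 hx'2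
      have hnpx' : ¬ ParMul μ₁ x' := hparlem x' (d - r) (d - s) hx'1 hx'2 (by omega)
      have hle2' := min₂ x' hx'S hnpx'
      have hPx' : d * pair2 x' ν = (d - r) * pair2 μ₁ ν + (d - s) * pair2 μ₂ ν := by
        simp only [pair2]
        linear_combination ν.1 * hx'1 + ν.2 * hx'2
      have k3 := mul_le_mul_of_nonneg_left hle2' (le_of_lt hdpos)
      have k4 := mul_le_mul_of_nonneg_left hP₁le₂ (show (0:ℤ) ≤ d - r by omega)
      nlinarith [hPx', k3, k4, hP₂pos, hrs_gt, mul_pos (sub_pos.2 hrs_gt) hP₂pos]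
  exact ⟨μ₁, hμ₁G, μ₂, hμ₂G, hD1, fun μ hμG hne1 hne2 =>
    ⟨min₁ μ (hGS hμG) (hGne0 μ hμG), min₂ μ (hGS hμG) (hnotparG μ hμG hne1)⟩⟩
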